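/- Let (a_n) be a sequence of positive reals satisfying the shifted supermultiplicativity relation a_{n+m+10} ≥ a_n · a_m for all n, m ≥ 1, and suppose a_n^{1/n} is bounded above by some constant C. Then the limit lim_{n→∞} a_n^{1/n} exists. -/

import Mathlib

open Filter Real Topology

set_option maxHeartbeats 1000000

/-- Shifted Fekete lemma: if `a` is positive, satisfies the shifted
supermultiplicativity `a (n+m+10) ≥ a n * a m` for `n, m ≥ 1`, and
`a n ^ (1/n)` is bounded above, then `lim a n ^ (1/n)` exists. -/
theorem shifted_fekete_limit_exists
    (a : ℕ → ℝ) (hpos : ∀ n, 0 < a n)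
    (hsuper : ∀ n m, 1 ≤ n → 1 ≤ m → a n * a m ≤ a (n + m + 10))
    (C : ℝ) (hbound : ∀ n, 1 ≤ n → a n ^ ((1 : ℝ) / n) ≤ C) :
    ∃ L : ℝ, Filter.Tendsto (fun n => a n ^ ((1 : ℝ) / n)) Filter.atTop (nhds L) := by
  set s : ℕ → ℝ := fun n => Real.log (a n) with hs
  -- superadditivity of s
  have hsadd : ∀ n m, 1 ≤ n → 1 ≤ m → s n + s m ≤ s (n + m + 10) := by
    intro n m hn hm
    have h1 := hsuper n m hn hm
    have h2 := Real.log_le_log (mul_pos (hpos n) (hpos m)) h1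
    rwa [Real.log_mul (hpos n).ne' (hpos m).ne'] at h2
  -- upper bound on s n / n
  have hM : ∀ n : ℕ, 1 ≤ n → s n / n ≤ Real.log C := by
    intro n hn
    have hn0 : (0:ℝ) < n := by exact_mod_cast hn
    have h1 := Real.log_le_log (Real.rpow_pos_of_pos (hpos n) _) (hbound n hn)
    rw [Real.log_rpow (hpos n)] at h1
    rw [div_eq_inv_mul, ← one_div]
    exact h1
  set M : ℝ := max (Real.log C) 0 with hMdef
  have hM' : ∀ n : ℕ, 1 ≤ n → s n / ((n:ℝ) + 10) ≤ M := by
    intro n hn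
    have hn0 : (0:ℝ) < n := by exact_mod_cast hn
    rcases le_or_gt (s n) 0 with h | h
    · have h0 : s n / ((n:ℝ) + 10) ≤ 0 := div_nonpos_of_nonpos_of_nonneg h (by linarith)
      exact h0.trans (le_max_right _ _)
    · have h1 : s n / ((n:ℝ) + 10) ≤ s n / n := by
        apply div_le_div_of_nonneg_left h.le hn0 (by linarith)
      exact (h1.trans (hM n hn)).trans (le_max_left _ _)
  set Tset : Set ℝ := (fun n : ℕ => s n / ((n:ℝ) + 10)) '' {n | 1 ≤ n} with hTset
  have hne : Tset.Nonempty := ⟨s 1 / ((1:ℝ) + 10), 1, by norm_num, by norm_num⟩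
  have hbdd : BddAbove Tset := by
    refine ⟨M, ?_⟩
    rintro x ⟨n, hn, rfl⟩
    exact hM' n hn
  set T : ℝ := sSup Tset with hT
  have hT_le : ∀ n : ℕ, 1 ≤ n → s n / ((n:ℝ) + 10) ≤ T := by
    intro n hn
    exact le_csSup hbdd ⟨n, hn, rfl⟩
  -- key superadditive iteration
  have key : ∀ m : ℕ, 1 ≤ m → ∀ k r : ℕ, 1 ≤ r →
      (k:ℝ) * s m + s r ≤ s (k * (m + 10) + r) := by
    intro m hm k
    induction k with
    | zero => intro r hr; simp
    | succ k ih =>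
      intro r hr
      have h1 := ih r hr
      have hx : 1 ≤ k * (m + 10) + r := le_add_of_nonneg_of_le (Nat.zero_le _) hr
      have h2 := hsadd (k * (m + 10) + r) m hx hm
      have heq : (k * (m + 10) + r) + m + 10 = (k + 1) * (m + 10) + r := by ring
      rw [heq] at h2
      push_cast
      linarith
  -- the limit
  have hTend : Tendsto (fun n : ℕ => s n / n) atTop (𝓝 T) := by
    rw [Metric.tendsto_atTop]
    intro ε hε
    obtain ⟨x, hxmem, hxT⟩ := exists_lt_of_lt_csSup hne (show T - ε/2 < T by linarith)
    obtain ⟨m, hm, rfl⟩ := hxmem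
    have hm : 1 ≤ m := hm
    have hm10 : (0:ℝ) < (m:ℝ) + 10 := by positivity
    -- min of s over [1, m+10]
    obtain ⟨b, hbmem, hbmin⟩ := Finset.exists_min_image (Finset.Icc 1 (m+10)) s
      ⟨1, Finset.mem_Icc.mpr ⟨le_refl _, by omega⟩⟩
    set B : ℝ := s b with hB
    set D : ℝ := |s m| + |B| with hD
    have hD0 : 0 ≤ D := by positivity
    -- choose N
    obtain ⟨N, hN⟩ := exists_nat_gt (max (max (2 * D / ε) (20 * |T| / ε)) 1)
    refine ⟨N, ?_⟩
    intro n hn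
    have hNn : (N:ℝ) ≤ n := by exact_mod_cast hn
    have hn1R : (1:ℝ) < n := lt_of_le_of_lt (le_max_right _ _) (lt_of_lt_of_le hN hNn)
    have hn1 : 1 ≤ n := by exact_mod_cast hn1R.le
    have hn0 : (0:ℝ) < n := by linarith
    have hnD : 2 * D / ε < n :=
      lt_of_le_of_lt ((le_max_left _ _).trans (le_max_left _ _)) (lt_of_lt_of_le hN hNn)
    have hnT : 20 * |T| / ε < n :=
      lt_of_le_of_lt ((le_max_right _ _).trans (le_max_left _ _)) (lt_of_lt_of_le hN hNn)
    -- decomposition n = k * (m+10) + r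
    set k : ℕ := (n - 1) / (m + 10) with hk
    have hdm2 : (m + 10) * k + (n - 1) % (m + 10) = n - 1 := by
      rw [hk]; exact Nat.div_add_mod _ _
    have hcomm : k * (m + 10) = (m + 10) * k := Nat.mul_comm _ _
    have hmod : (n - 1) % (m + 10) < m + 10 := Nat.mod_lt _ (by omega)
    set r : ℕ := n - k * (m + 10) with hr
    have hr1 : 1 ≤ r := by omega
    have hrle : r ≤ m + 10 := by omega
    have hnkr : n = k * (m + 10) + r := by omega
    -- key inequality
    have h1 : (k:ℝ) * s m + s r ≤ s n := by
      have := key m hm k r hr1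
      rwa [← hnkr] at this
    have hBr : B ≤ s r := hbmin r (Finset.mem_Icc.mpr ⟨hr1, hrle⟩)
    -- (k:ℝ) * (m+10) = n - r
    have hkr : (k:ℝ) * ((m:ℝ) + 10) = (n:ℝ) - (r:ℝ) := by
      have h := congrArg (fun x : ℕ => (x:ℝ)) hnkr
      push_cast at h
      linarith
    have hrR1 : (1:ℝ) ≤ (r:ℝ) := by exact_mod_cast hr1
    have hrRle : (r:ℝ) ≤ (m:ℝ) + 10 := by exact_mod_cast hrle
    -- k * s m ≥ n * s m / (m+10) - |s m|
    have h2 : (n:ℝ) * s m / ((m:ℝ) + 10) - |s m| ≤ (k:ℝ) * s m := by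
      rw [sub_le_iff_le_add, div_le_iff₀ hm10]
      have habs1 : (r:ℝ) * s m ≤ |s m| * ((m:ℝ) + 10) := by
        calc (r:ℝ) * s m ≤ (r:ℝ) * |s m| := by
              apply mul_le_mul_of_nonneg_left (le_abs_self _) (by linarith)
          _ ≤ ((m:ℝ) + 10) * |s m| := by
              apply mul_le_mul_of_nonneg_right hrRle (abs_nonneg _)
          _ = |s m| * ((m:ℝ) + 10) := by ring
      have hprod : (k:ℝ) * ((m:ℝ) + 10) * s m = ((n:ℝ) - (r:ℝ)) * s m := by
        rw [hkr]
      nlinarith [hprod, habs1]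
    -- lower bound
    have h5 : (n:ℝ) * s m / ((m:ℝ) + 10) - D ≤ s n := by
      have hBabs : -|B| ≤ B := neg_abs_le _
      have hDval : D = |s m| + |B| := hD
      linarith [h1, h2, hBr]
    have hlow : s m / ((m:ℝ) + 10) - D / n ≤ s n / n := by
      have h6 : s m / ((m:ℝ) + 10) - D / (n:ℝ)
          = ((n:ℝ) * s m / ((m:ℝ) + 10) - D) / (n:ℝ) := by
        field_simp
      rw [h6]
      gcongr
    -- D / n < ε / 2
    have hDn : D / n < ε / 2 := by
      rw [div_lt_iff₀ hn0]
      have := (div_lt_iff₀ hε).mp hnD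
      linarith
    -- upper bound : s n / n ≤ T + 10 * |T| / n
    have hup : s n / n ≤ T + 10 * |T| / n := by
      have h3 : s n / ((n:ℝ) + 10) ≤ T := hT_le n hn1
      have h4 : s n ≤ T * ((n:ℝ) + 10) := by
        rw [div_le_iff₀ (by linarith)] at h3
        linarith
      have h7 : s n ≤ T * (n:ℝ) + 10 * |T| := by
        have habs := le_abs_self T
        have hexp : T * ((n:ℝ) + 10) = T * (n:ℝ) + 10 * T := by ring
        linarith
      have h6 : T + 10 * |T| / (n:ℝ) = (T * (n:ℝ) + 10 * |T|) / (n:ℝ) := by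
        field_simp
      rw [h6]
      gcongr
    have hTn : 10 * |T| / n < ε / 2 := by
      rw [div_lt_iff₀ hn0]
      have := (div_lt_iff₀ hε).mp hnT
      linarith
    rw [Real.dist_eq, abs_lt]
    constructor
    · -- -(ε) < s n / n - T
      have : T - ε < s n / n := by
        calc T - ε < s m / ((m:ℝ) + 10) - ε/2 := by linarith [hxT]
          _ ≤ s n / n + D / n - ε/2 := by linarith [hlow]
          _ < s n / n := by linarith [hDn]
      linarith
    · linarith [hup, hTn]
  refine ⟨Real.exp T, ?_⟩
  have hcomp : Tendsto (fun n : ℕ => Real.exp (s n / n)) atTop (𝓝 (Real.exp T)) :=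
    (Real.continuous_exp.tendsto T).comp hTend
  apply hcomp.congr'
  filter_upwards [eventually_ge_atTop 1] with n hn
  rw [Real.rpow_def_of_pos (hpos n), mul_one_div]
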